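/- Let d ≥ 2 and let K ⊂ ℝ^d be a convex body in standard position: w(K) = 1, K is spiky in direction −e_d, and K ∩ H_K(−e_d) = {0}; write T_K = T_K(0) for the tangent cone of K at 0 and H_t = {x : x_d = t}. Then, as t → 0 along positive values, the sets (1/t)·((T_K \ int K) ∩ H_t) converge in the Hausdorff distance to ∂T_K ∩ H_1, where ∂T_K denotes the boundary of T_K. -/

import Mathlib

open Set Metric Pointwise RealInnerProductSpace MeasureTheory

noncomputable section

/-- A plank in `ℝ^d`: the region between two parallel hyperplanes, of width `w`. -/
def IsPlank {d : ℕ} (P : Set (EuclideanSpace ℝ (Fin d))) (w : ℝ) : Prop :=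
  ∃ (u : EuclideanSpace ℝ (Fin d)) (a b : ℝ), ‖u‖ = 1 ∧ a ≤ b ∧ w = b - a ∧
    P = {x | a ≤ ⟪x, u⟫ ∧ ⟪x, u⟫ ≤ b}

/-- The support function of a set. -/
def suppFn {d : ℕ} (K : Set (EuclideanSpace ℝ (Fin d))) (u : EuclideanSpace ℝ (Fin d)) : ℝ :=
  sSup ((fun x => ⟪x, u⟫) '' K)

/-- The minimal width of a set: the minimum of `h_K(u) + h_K(-u)` over unit vectors `u`. -/
def minWidth {d : ℕ} (K : Set (EuclideanSpace ℝ (Fin d))) : ℝ :=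
  sInf {w | ∃ u : EuclideanSpace ℝ (Fin d), ‖u‖ = 1 ∧ w = suppFn K u + suppFn K (-u)}

/-- The supporting hyperplane of `K` with outer normal `u`. -/
def suppHyp {d : ℕ} (K : Set (EuclideanSpace ℝ (Fin d))) (u : EuclideanSpace ℝ (Fin d)) :
    Set (EuclideanSpace ℝ (Fin d)) :=
  {x | ⟪x, u⟫ = suppFn K u}

/-- The tangent cone of `K` at a point `x`:
`closure {x + α (y - x) : y ∈ K, α ≥ 0}`. -/
def tangentConeOf {d : ℕ} (K : Set (EuclideanSpace ℝ (Fin d))) (x : EuclideanSpace ℝ (Fin d)) :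
    Set (EuclideanSpace ℝ (Fin d)) :=
  closure {z | ∃ y ∈ K, ∃ α : ℝ, 0 ≤ α ∧ z = x + α • (y - x)}

/-- `K` is spiky in direction `u`: `K ∩ H_K(u)` is a single point `x` at which
`T_K(x) ∩ H_K(u) = {x}`. -/
def IsSpiky {d : ℕ} (K : Set (EuclideanSpace ℝ (Fin d))) (u : EuclideanSpace ℝ (Fin d)) : Prop :=
  ∃ x, K ∩ suppHyp K u = {x} ∧ tangentConeOf K x ∩ suppHyp K u = {x}

private lemma shrink_mem_interior {E : Type*} [NormedAddCommGroup E] [NormedSpace ℝ E]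
    {K : Set E} (hK : Convex ℝ K) (h0 : (0:E) ∈ K) {y : E} (hy : y ∈ interior K)
    {a : ℝ} (ha : 0 < a) (ha1 : a ≤ 1) : a • y ∈ interior K := by
  have h := hK.combo_interior_closure_mem_interior hy (subset_closure h0) ha
    (by linarith : (0:ℝ) ≤ 1 - a) (by ring)
  simpa using h

private lemma frontier_crossing {X : Type*} [MetricSpace X] {s : Set X} (hs : IsClosed s)
    {g : ℝ → X} (hg : Continuous g) (h0 : g 0 ∈ s) (h1 : g 1 ∉ s) :
    ∃ θ ∈ Set.Icc (0:ℝ) 1, g θ ∈ frontier s := by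
  set A := Set.Icc (0:ℝ) 1 ∩ g ⁻¹' s with hA
  have hAne : A.Nonempty := ⟨0, ⟨le_refl 0, zero_le_one⟩, h0⟩
  have hAbdd : BddAbove A := ⟨1, fun θ hθ => hθ.1.2⟩
  have hAclosed : IsClosed A := isClosed_Icc.inter (hs.preimage hg)
  set θ := sSup A with hθdef
  have hθA : θ ∈ A := hAclosed.csSup_mem hAne hAbdd
  have hθ1 : θ < 1 := lt_of_le_of_ne hθA.1.2 (fun h => h1 (h ▸ hθA.2))
  refine ⟨θ, hθA.1, ?_⟩
  rw [frontier_eq_closure_inter_closure]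
  refine ⟨subset_closure hθA.2, ?_⟩
  rw [mem_closure_iff_nhds]
  intro U hU
  have hpre : g ⁻¹' U ∈ nhds θ := hg.continuousAt.preimage_mem_nhds hU
  obtain ⟨η, hη, hball⟩ := Metric.mem_nhds_iff.1 hpre
  set θ' := min 1 (θ + η/2) with hθ'def
  have hθ'1 : θ' ≤ 1 := min_le_left _ _
  have hθ'gt : θ < θ' := lt_min hθ1 (by linarith)
  have hθ'0 : 0 ≤ θ' := le_trans hθA.1.1 hθ'gt.le
  have hθ'near : θ' ∈ Metric.ball θ η := by
    rw [Metric.mem_ball, Real.dist_eq, abs_of_nonneg (by linarith)]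
    have h2 : θ' ≤ θ + η/2 := min_le_right _ _
    linarith
  have hθ'nA : θ' ∉ A := fun h => absurd (le_csSup hAbdd h) (not_le.2 hθ'gt)
  exact ⟨g θ', hball hθ'near, fun h => hθ'nA ⟨⟨hθ'0, hθ'1⟩, h⟩⟩

set_option maxHeartbeats 1600000 in
/-- Lemma 1: for a spiky convex body in standard position, the scaled slices
`(1/t) • ((T_K \ int K) ∩ H_t)` converge in Hausdorff distance to `∂T_K ∩ H_1` as `t → 0⁺`. -/
theorem scaled_slices_tendsto_boundary (d : ℕ) (hd : 2 ≤ d)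
    (K : Set (EuclideanSpace ℝ (Fin d)))
    (hKc : IsCompact K) (hKconv : Convex ℝ K) (hKint : (interior K).Nonempty)
    (hw : minWidth K = 1)
    (hspiky : IsSpiky K (-(EuclideanSpace.single (⟨d - 1, by omega⟩ : Fin d) (1 : ℝ))))
    (hzero : K ∩ suppHyp K (-(EuclideanSpace.single (⟨d - 1, by omega⟩ : Fin d) (1 : ℝ))) = {0}) :
    Filter.Tendsto
      (fun t : ℝ => Metric.hausdorffDist
        ((1 / t) • ((tangentConeOf K 0 \ interior K) ∩
          {x : EuclideanSpace ℝ (Fin d) | x ⟨d - 1, by omega⟩ = t}))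
        (frontier (tangentConeOf K 0) ∩
          {x : EuclideanSpace ℝ (Fin d) | x ⟨d - 1, by omega⟩ = 1}))
      (nhdsWithin 0 (Set.Ioi 0)) (nhds 0) := by
  classical
  have hd1 : d - 1 < d := by omega
  set i : Fin d := ⟨d - 1, by omega⟩ with hidef
  set e : EuclideanSpace ℝ (Fin d) := EuclideanSpace.single i 1 with hedef
  set T := tangentConeOf K 0 with hTdef
  set C : Set (EuclideanSpace ℝ (Fin d)) :=
    {z | ∃ y ∈ K, ∃ α : ℝ, 0 ≤ α ∧ z = 0 + α • (y - 0)} with hCdef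
  have hTC : T = closure C := rfl
  have hmemC : ∀ z : EuclideanSpace ℝ (Fin d),
      z ∈ C ↔ ∃ y ∈ K, ∃ α : ℝ, 0 ≤ α ∧ z = α • y := by
    intro z
    simp only [hCdef, mem_setOf_eq, zero_add, sub_zero]
  -- basic facts
  have h0 : (0 : EuclideanSpace ℝ (Fin d)) ∈ K ∩ suppHyp K (-e) := (Set.ext_iff.1 hzero 0).2 rfl
  have h0K : (0 : EuclideanSpace ℝ (Fin d)) ∈ K := h0.1
  have hsupp : suppFn K (-e) = 0 := by
    have h2 : ⟪(0 : EuclideanSpace ℝ (Fin d)), -e⟫ = suppFn K (-e) := h0.2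
    simpa using h2.symm
  have hinner : ∀ x : EuclideanSpace ℝ (Fin d), ⟪x, -e⟫ = -(x i) := by
    intro x
    rw [inner_neg_right, hedef]
    norm_num [EuclideanSpace.inner_single_right]
  have hπcont : Continuous (fun x : EuclideanSpace ℝ (Fin d) => x i) := PiLp.continuous_apply 2 _ i
  have hKpos : ∀ x ∈ K, 0 ≤ x i := by
    intro x hx
    have hb : BddAbove ((fun x : EuclideanSpace ℝ (Fin d) => ⟪x, -e⟫) '' K) :=
      (hKc.image (continuous_id.inner continuous_const)).bddAbove
    have hle : ⟪x, -e⟫ ≤ suppFn K (-e) := le_csSup hb (mem_image_of_mem _ hx)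
    rw [hsupp, hinner x] at hle
    linarith
  have hKC : K ⊆ C := fun y hy => (hmemC y).2 ⟨y, hy, 1, zero_le_one, (one_smul _ _).symm⟩
  have hKT : K ⊆ T := fun y hy => subset_closure (hKC hy)
  have hCsmul : ∀ c : ℝ, 0 ≤ c → ∀ z ∈ C, c • z ∈ C := by
    intro c hc z hz
    obtain ⟨y, hy, α, hα, rfl⟩ := (hmemC z).1 hz
    exact (hmemC _).2 ⟨y, hy, c * α, mul_nonneg hc hα, smul_smul c α y⟩
  have hTsmul : ∀ c : ℝ, 0 ≤ c → ∀ z ∈ T, c • z ∈ T := by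
    intro c hc z hz
    have h1 : c • z ∈ closure ((c • ·) '' C) :=
      image_closure_subset_closure_image (continuous_const_smul c) (mem_image_of_mem _ hz)
    refine closure_mono ?_ h1
    rintro _ ⟨w, hw, rfl⟩
    exact hCsmul c hc w hw
  have hTclosed : IsClosed T := isClosed_closure
  have hintTsmul : ∀ c : ℝ, 0 < c → ∀ x ∈ interior T, c • x ∈ interior T := by
    intro c hc x hx
    have hopen : IsOpen ((fun y : EuclideanSpace ℝ (Fin d) => c • y) '' interior T) :=
      isOpenMap_smul₀ (ne_of_gt hc) _ isOpen_interior
    have himg : (fun y : EuclideanSpace ℝ (Fin d) => c • y) '' interior T ⊆ T := by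
      rintro _ ⟨y, hy, rfl⟩
      exact hTsmul _ hc.le _ (interior_subset hy)
    exact interior_maximal himg hopen ⟨x, hx, rfl⟩
  have hTpos : ∀ z ∈ T, 0 ≤ z i := by
    have hsub : closure C ⊆ {z : EuclideanSpace ℝ (Fin d) | 0 ≤ z i} := by
      apply closure_minimal ?_ (isClosed_le continuous_const hπcont)
      rintro z hz
      obtain ⟨y, hy, α, hα, rfl⟩ := (hmemC z).1 hz
      show (0:ℝ) ≤ (α • y) i
      rw [PiLp.smul_apply, smul_eq_mul]
      exact mul_nonneg hα (hKpos y hy)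
    exact fun z hz => hsub hz
  have hT0 : ∀ z ∈ T, z i = 0 → z = 0 := by
    obtain ⟨x, hx1, hx2⟩ := hspiky
    have h1 : K ∩ suppHyp K (-e) = {x} := hx1
    have hx0 : x = 0 := by
      have h3 : ({x} : Set (EuclideanSpace ℝ (Fin d))) = {0} := h1.symm.trans hzero
      exact singleton_eq_singleton_iff.1 h3
    subst hx0
    have h2 : T ∩ suppHyp K (-e) = {0} := hx2
    intro z hz hzi
    have hzsupp : z ∈ suppHyp K (-e) := by
      show ⟪z, -e⟫ = suppFn K (-e)
      rw [hsupp, hinner z, hzi, neg_zero]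
    have hmem : z ∈ T ∩ suppHyp K (-e) := ⟨hz, hzsupp⟩
    rw [h2] at hmem
    exact hmem
  have hei : e i = 1 := by
    rw [hedef]
    simp [EuclideanSpace.single_apply]
  have hnorme : ‖e‖ = 1 := by rw [hedef]; simp
  have hintTpos : ∀ z ∈ interior T, 0 < z i := by
    intro z hz
    rcases lt_or_eq_of_le (hTpos z (interior_subset hz)) with h | h
    · exact h
    · exfalso
      obtain ⟨δ, hδ, hball⟩ := Metric.isOpen_iff.1 isOpen_interior z hz
      have hmem : z - (δ/2) • e ∈ T := by
        apply interior_subset (hball ?_)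
        rw [Metric.mem_ball, dist_eq_norm, sub_sub_cancel_left, norm_neg, norm_smul, hnorme,
          mul_one, Real.norm_eq_abs, abs_of_pos (by linarith)]
        linarith
      have hge := hTpos _ hmem
      rw [PiLp.sub_apply, PiLp.smul_apply, hei, smul_eq_mul, mul_one, ← h] at hge
      linarith
  obtain ⟨z₀, hz₀⟩ := hKint
  have hz₀T : z₀ ∈ interior T := interior_mono hKT hz₀
  have hz₀i : 0 < z₀ i := hintTpos _ hz₀T
  have hzero_apply : ∀ j : Fin d, (0 : EuclideanSpace ℝ (Fin d)) j = 0 := fun j => rfl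
  -- Lemma A : pointwise scaling into interior K
  have hA : ∀ x ∈ interior T, ∃ τ : ℝ, 0 < τ ∧ τ • x ∈ interior K := by
    intro x hx
    obtain ⟨r, hr, hrball⟩ := Metric.isOpen_iff.1 isOpen_interior z₀ hz₀
    obtain ⟨ε', hε', hball⟩ := Metric.isOpen_iff.1 isOpen_interior x hx
    set s := ε' / (2 * (‖x - z₀‖ + 1)) with hs
    have hspos : 0 < s := by
      apply div_pos hε'
      positivity
    set x' := x + s • (x - z₀) with hx'
    have hx'T : x' ∈ T := by
      apply interior_subset (hball ?_)
      rw [mem_ball_iff_norm, hx', add_sub_cancel_left, norm_smul, Real.norm_eq_abs,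
        abs_of_pos hspos, hs]
      rw [div_mul_eq_mul_div, div_lt_iff₀ (by positivity)]
      nlinarith [norm_nonneg (x - z₀)]
    have hx'cl : x' ∈ closure C := hx'T
    obtain ⟨x'', hx''C, hx''near⟩ := Metric.mem_closure_iff.1 hx'cl (s * r) (by positivity)
    obtain ⟨k, hk, α, hα, hx''⟩ := (hmemC x'').1 hx''C
    set ztil := z₀ + s⁻¹ • (x' - x'') with hztil
    have hztilK : ztil ∈ interior K := by
      apply hrball
      rw [mem_ball_iff_norm, hztil, add_sub_cancel_left, norm_smul, Real.norm_eq_abs,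
        abs_of_pos (inv_pos.2 hspos)]
      have h2 : ‖x' - x''‖ < s * r := by rwa [← dist_eq_norm]
      calc s⁻¹ * ‖x' - x''‖ < s⁻¹ * (s * r) := by
            exact mul_lt_mul_of_pos_left h2 (inv_pos.2 hspos)
        _ = r := by field_simp
    set q := 1 + s + α with hq
    have hqpos : 0 < q := by rw [hq]; linarith
    set τ := (1 + s) / (2 * q) with hτ
    set lam := s / (2 * q) with hlamdef
    set mu := α / (2 * q) with hmudef
    have hlam : 0 < lam := div_pos hspos (by linarith)
    have hmu : 0 ≤ mu := div_nonneg hα (by linarith)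
    have hlm : lam + mu < 1 := by
      rw [hlamdef, hmudef, ← add_div, div_lt_one (by linarith)]
      rw [hq]; linarith
    set c := mu / (1 - lam) with hcdef
    have hc0 : 0 ≤ c := div_nonneg hmu (by linarith)
    have hc1 : c ≤ 1 := by
      rw [hcdef, div_le_one (by linarith)]
      linarith
    have hk' : c • k ∈ K := by
      have h4 := hKconv hk h0K hc0 (by linarith : (0:ℝ) ≤ 1 - c) (by ring)
      simpa using h4
    refine ⟨τ, by rw [hτ]; positivity, ?_⟩
    have hxx : x'' = α • k := by simpa using hx''
    have hkey : τ • x = lam • ztil + (1 - lam) • (c • k) := by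
      rw [hτ, hlamdef, hcdef, hmudef, hlamdef, hztil, hxx, hx']
      have hsne : s ≠ 0 := ne_of_gt hspos
      have hqne : (2 : ℝ) * q ≠ 0 := by positivity
      have h2qs : 2 * q - s ≠ 0 := by rw [hq]; nlinarith
      match_scalars <;> field_simp <;> ring
    rw [hkey]
    exact hKconv.combo_interior_closure_mem_interior hztilK (subset_closure hk') hlam
      (by linarith) (by ring)
  -- uniform version on compact subsets of interior T
  have hU : ∀ S : Set (EuclideanSpace ℝ (Fin d)), IsCompact S → S ⊆ interior T →
      ∃ t0 : ℝ, 0 < t0 ∧ ∀ x ∈ S, ∀ t : ℝ, 0 < t → t ≤ t0 → t • x ∈ interior K := by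
    intro S hScomp hSsub
    rcases S.eq_empty_or_nonempty with rfl | hSne
    · exact ⟨1, one_pos, by simp⟩
    choose! τ hτpos hτmem using fun x (hx : x ∈ S) => hA x (hSsub hx)
    let U : S → Set (EuclideanSpace ℝ (Fin d)) := fun x => (fun y => τ ↑x • y) ⁻¹' interior K
    have hUopen : ∀ x : S, IsOpen (U x) := fun x =>
      isOpen_interior.preimage (continuous_const_smul _)
    have hUcov : S ⊆ ⋃ x : S, U x := fun y hy =>
      mem_iUnion.2 ⟨⟨y, hy⟩, by simpa [U] using hτmem y hy⟩
    obtain ⟨F, hF⟩ := hScomp.elim_finite_subcover U hUopen hUcov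
    have hFne : F.Nonempty := by
      obtain ⟨y, hy⟩ := hSne
      obtain ⟨x, hxF, _⟩ := mem_iUnion₂.1 (hF hy)
      exact ⟨x, hxF⟩
    refine ⟨F.inf' hFne (fun x => τ ↑x), ?_, ?_⟩
    · rw [Finset.lt_inf'_iff]
      exact fun x _ => hτpos ↑x x.2
    · intro x hx t ht htle
      obtain ⟨j, hjF, hjx⟩ := mem_iUnion₂.1 (hF hx)
      have h1 : τ ↑j • x ∈ interior K := hjx
      have hτj : 0 < τ ↑j := hτpos ↑j j.2
      have h2 : t / τ ↑j ≤ 1 := by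
        rw [div_le_one hτj]
        exact le_trans htle (Finset.inf'_le _ hjF)
      have h3 : 0 < t / τ ↑j := div_pos ht hτj
      have h4 := shrink_mem_interior hKconv h0K h1 h3 h2
      rwa [smul_smul, div_mul_cancel₀ _ (ne_of_gt hτj)] at h4
  -- compact slice and bound
  have hS1 : IsCompact (T ∩ sphere (0 : EuclideanSpace ℝ (Fin d)) 1) :=
    (isCompact_sphere 0 1).inter_left hTclosed
  have hz₀ne : z₀ ≠ 0 := by
    intro h
    rw [h, hzero_apply] at hz₀i
    exact lt_irrefl 0 hz₀i
  have hS1ne : (T ∩ sphere (0 : EuclideanSpace ℝ (Fin d)) 1).Nonempty := by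
    refine ⟨‖z₀‖⁻¹ • z₀, hTsmul _ (by positivity) _ (interior_subset hz₀T), ?_⟩
    rw [mem_sphere_zero_iff_norm, norm_smul, norm_inv, norm_norm,
      inv_mul_cancel₀ (norm_ne_zero_iff.2 hz₀ne)]
  obtain ⟨v, hv, hvmin⟩ := hS1.exists_isMinOn hS1ne hπcont.continuousOn
  have hvne : v ≠ 0 := by
    intro h
    have := hv.2
    rw [h, mem_sphere_zero_iff_norm, norm_zero] at this
    norm_num at this
  have hm : 0 < v i := by
    rcases lt_or_eq_of_le (hTpos v hv.1) with h | h
    · exact h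
    · exact absurd (hT0 v hv.1 h.symm) hvne
  have hbound : ∀ x ∈ T, x i = 1 → ‖x‖ ≤ (v i)⁻¹ := by
    intro x hx hxi
    have hxne : x ≠ 0 := by
      intro h
      rw [h, hzero_apply] at hxi
      norm_num at hxi
    have hxpos : 0 < ‖x‖ := norm_pos_iff.2 hxne
    have hxs : ‖x‖⁻¹ • x ∈ T ∩ sphere (0 : EuclideanSpace ℝ (Fin d)) 1 := by
      refine ⟨hTsmul _ (by positivity) _ hx, ?_⟩
      rw [mem_sphere_zero_iff_norm, norm_smul, norm_inv, norm_norm,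
        inv_mul_cancel₀ (ne_of_gt hxpos)]
    have hle : v i ≤ (‖x‖⁻¹ • x) i := hvmin hxs
    simp only [PiLp.smul_apply, smul_eq_mul, hxi, mul_one] at hle
    rw [← inv_inv ‖x‖]
    exact inv_anti₀ hm hle
  have hLcomp : IsCompact (T ∩ {x : EuclideanSpace ℝ (Fin d) | x i = 1}) := by
    apply isCompact_of_isClosed_isBounded
      (hTclosed.inter (isClosed_eq hπcont continuous_const))
    apply (isBounded_closedBall (x := (0 : EuclideanSpace ℝ (Fin d))) (r := (v i)⁻¹)).subset
    intro x hx
    exact mem_closedBall_zero_iff.2 (hbound x hx.1 hx.2)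
  set B := frontier T ∩ {x : EuclideanSpace ℝ (Fin d) | x i = 1} with hBdef
  have hfrT : frontier T ⊆ T := fun x hx => by
    have h7 := frontier_subset_closure hx
    rwa [hTclosed.closure_eq] at h7
  have hBsub : B ⊆ T ∩ {x : EuclideanSpace ℝ (Fin d) | x i = 1} :=
    fun x hx => ⟨hfrT hx.1, hx.2⟩
  -- B is nonempty
  have hBne : B.Nonempty := by
    set z1 := (z₀ i)⁻¹ • z₀ with hz1
    have hz1T : z1 ∈ interior T := hintTsmul _ (inv_pos.2 hz₀i) _ hz₀T
    have hz1i : z1 i = 1 := by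
      rw [hz1, PiLp.smul_apply, smul_eq_mul, inv_mul_cancel₀ (ne_of_gt hz₀i)]
    have hd0 : (0:ℕ) < d := by omega
    set j : Fin d := ⟨0, hd0⟩ with hjdef
    have hji : i ≠ j := by
      intro h
      have h2 := congrArg Fin.val h
      simp [hidef, hjdef] at h2
      omega
    set u : EuclideanSpace ℝ (Fin d) := EuclideanSpace.single j 1 with hu
    have hui : u i = 0 := by
      rw [hu]
      simp [EuclideanSpace.single_apply, hji]
    have hunorm : ‖u‖ = 1 := by rw [hu]; simp
    set R := (v i)⁻¹ + ‖z1‖ + 1 with hR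
    have hRpos : 0 < R := by
      rw [hR]
      have := norm_nonneg z1
      have := inv_pos.2 hm
      linarith
    set w := z1 + R • u with hw
    have hwi : w i = 1 := by
      rw [hw, PiLp.add_apply, hz1i, PiLp.smul_apply, hui, smul_eq_mul, mul_zero, add_zero]
    have hwT : w ∉ T := by
      intro hwT
      have hb := hbound w hwT hwi
      have hnw : R ≤ ‖w‖ + ‖z1‖ := by
        have h5 : ‖R • u‖ = R := by
          rw [norm_smul, hunorm, mul_one, Real.norm_eq_abs, abs_of_pos hRpos]
        calc R = ‖R • u‖ := h5.symm
          _ = ‖w - z1‖ := by rw [hw, add_sub_cancel_left]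
          _ ≤ ‖w‖ + ‖z1‖ := norm_sub_le _ _
      rw [hR] at hnw
      linarith
    have hgcont : Continuous (fun θ : ℝ => z1 + θ • (w - z1)) :=
      continuous_const.add (continuous_id.smul continuous_const)
    have hg0 : z1 + (0:ℝ) • (w - z1) ∈ T := by
      simpa using interior_subset hz1T
    have hg1 : z1 + (1:ℝ) • (w - z1) ∉ T := by
      simpa using hwT
    obtain ⟨θ, hθmem, hθfr⟩ := frontier_crossing hTclosed hgcont hg0 hg1
    refine ⟨z1 + θ • (w - z1), hθfr, ?_⟩
    show (z1 + θ • (w - z1)) i = 1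
    rw [PiLp.add_apply, hz1i, PiLp.smul_apply, PiLp.sub_apply, hz1i, hwi]
    simp
  -- main convergence argument
  apply Metric.tendsto_nhds.2
  intro ε hε
  set S := (T ∩ {x : EuclideanSpace ℝ (Fin d) | x i = 1}) ∩
    {x : EuclideanSpace ℝ (Fin d) | ε/2 ≤ infDist x B} with hSdef
  have hScomp : IsCompact S :=
    hLcomp.inter_right (isClosed_le continuous_const (continuous_infDist_pt B))
  have hSsub : S ⊆ interior T := by
    rintro x ⟨⟨hxT, hxi⟩, hxd⟩
    by_contra hxint
    have hxB : x ∈ B := ⟨⟨subset_closure hxT, hxint⟩, hxi⟩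
    have hxd' : ε/2 ≤ infDist x B := hxd
    rw [infDist_zero_of_mem hxB] at hxd'
    linarith
  obtain ⟨t0, ht0pos, ht0⟩ := hU S hScomp hSsub
  filter_upwards [Ioo_mem_nhdsGT_of_mem (Set.left_mem_Ico.2 ht0pos)] with t ht
  obtain ⟨htpos, htlt⟩ := ht
  have htne : t ≠ 0 := ne_of_gt htpos
  have key : hausdorffDist
      ((1 / t) • ((T \ interior K) ∩ {x : EuclideanSpace ℝ (Fin d) | x i = t})) B ≤ ε/2 := by
    apply hausdorffDist_le_of_mem_dist (by linarith)
    · rintro a ⟨y, ⟨⟨hyT, hyK⟩, hyi⟩, rfl⟩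
      have hyi' : y i = t := hyi
      have hai : ((1/t) • y) i = 1 := by
        rw [PiLp.smul_apply, hyi', smul_eq_mul]
        field_simp
      have haT : (1/t) • y ∈ T := hTsmul _ (by positivity) _ hyT
      by_cases hcase : infDist ((1/t) • y) B < ε/2
      · obtain ⟨b, hbB, hdb⟩ := (Metric.infDist_lt_iff hBne).1 hcase
        exact ⟨b, hbB, hdb.le⟩
      · exfalso
        have hmemS : (1/t) • y ∈ S := ⟨⟨haT, hai⟩, le_of_not_gt hcase⟩
        have h6 := ht0 _ hmemS t htpos htlt.le
        rw [smul_smul, mul_one_div, div_self htne, one_smul] at h6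
        exact hyK h6
    · intro b hbB
      refine ⟨b, ⟨t • b, ⟨⟨?_, ?_⟩, ?_⟩, ?_⟩, by rw [dist_self]; linarith⟩
      · exact hTsmul t htpos.le b (hBsub hbB).1
      · intro hmem
        have h2 : (1/t) • (t • b) ∈ interior T :=
          hintTsmul _ (by positivity) _ (interior_mono hKT hmem)
        rw [smul_smul, one_div, inv_mul_cancel₀ htne, one_smul] at h2
        exact hbB.1.2 h2
      · show (t • b) i = t
        have hbi : b i = 1 := (hBsub hbB).2
        rw [PiLp.smul_apply, hbi, smul_eq_mul, mul_one]
      · show (1/t) • (t • b) = b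
        rw [smul_smul, one_div, inv_mul_cancel₀ htne, one_smul]
  rw [Real.dist_eq, sub_zero, abs_of_nonneg hausdorffDist_nonneg]
  exact lt_of_le_of_lt key (by linarith)

end
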